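/- arXiv:1805.04266 — 2 statements merged into one kernel-verified Lean document; each statement's English description precedes it below -/
import Mathlib

section
/- Define the unnormalized measure π on finite lists of customer types by π(c^1,…,c^L) = ∏_{ℓ=1}^{L} λ_{c^ℓ}/μ_{S({c^1,…,c^ℓ})} (with π(empty) = 1). Then π satisfies the global balance equations of the continuous-time Markov chain on lists whose transition rates are: from w = (c^1,…,c^L), append a customer of type c at the end at rate λ_c, and remove the ℓth customer at rate μ_{S(c^ℓ) ∖ S({c^1,…,c^{ℓ−1}})} for each 1 ≤ ℓ ≤ L. Explicitly, for every list w = (c^1,…,c^L): π(w)·(λ̄ + μ_{S({c^1,…,c^L})}) = 𝟙[L ≥ 1]·λ_{c^L}·π(c^1,…,c^{L−1}) + Σ_{c ∈ 𝒞} Σ_{k=0}^{L} μ_{S(c) ∖ S({c^1,…,c^k})} · π(c^1,…,c^k, c, c^{k+1},…,c^L). -/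
open Finset

def muS {S : Type*} (mu : S → ℝ) (B : Finset S) : ℝ := ∑ s ∈ B, mu s

def Sc {C S : Type*} [Fintype S] (R : C → S → Prop) [∀ c s, Decidable (R c s)]
    (c : C) : Finset S := Finset.univ.filter fun s => R c s

def SsetL {C S : Type*} [Fintype S] (R : C → S → Prop) [∀ c s, Decidable (R c s)]
    (w : List C) : Finset S := Finset.univ.filter fun s => ∃ c ∈ w, R c s

noncomputable def qweight {C S : Type*} [Fintype S]
    (R : C → S → Prop) [∀ c s, Decidable (R c s)]
    (lam : C → ℝ) (mu : S → ℝ) : List C → List C → ℝ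
  | _, [] => 1
  | pre, c :: w =>
      (lam c / muS mu (SsetL R (pre ++ [c]))) * qweight R lam mu (pre ++ [c]) w

section Aux
variable {C S : Type*} [Fintype S] [DecidableEq S]
  (R : C → S → Prop) [∀ c s, Decidable (R c s)]
  (lam : C → ℝ) (mu : S → ℝ)

lemma SsetL_nil : SsetL R ([] : List C) = ∅ := by simp [SsetL]

lemma SsetL_append (u v : List C) : SsetL R (u ++ v) = SsetL R u ∪ SsetL R v := by
  ext s; simp [SsetL, or_and_right, exists_or]

lemma SsetL_singleton (c : C) : SsetL R [c] = Sc R c := by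
  ext s; simp [SsetL, Sc]

lemma muS_pos (hmu : ∀ s, 0 < mu s) {B : Finset S} (hB : B.Nonempty) : 0 < muS mu B :=
  Finset.sum_pos (fun s _ => hmu s) hB

lemma muS_union_sdiff (B B' : Finset S) :
    muS mu (B ∪ B') = muS mu B + muS mu (B' \ B) := by
  rw [muS, muS, muS, ← Finset.sum_union Finset.disjoint_sdiff, Finset.union_sdiff_self_eq_union]

lemma muS_appc_pos (hmu : ∀ s, 0 < mu s) (hScne : ∀ c : C, (Sc R c).Nonempty)
    (pre : List C) (c : C) : 0 < muS mu (SsetL R (pre ++ [c])) := by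
  apply muS_pos mu hmu
  rcases hScne c with ⟨s, hs⟩
  exact ⟨s, by rw [SsetL_append]; exact Finset.mem_union_right _ (by rwa [SsetL_singleton])⟩

lemma qweight_congr {pre₁ pre₂ : List C} (h : SsetL R pre₁ = SsetL R pre₂) (w : List C) :
    qweight R lam mu pre₁ w = qweight R lam mu pre₂ w := by
  induction w generalizing pre₁ pre₂ with
  | nil => rfl
  | cons a v ih =>
    have h' : SsetL R (pre₁ ++ [a]) = SsetL R (pre₂ ++ [a]) := by
      rw [SsetL_append, SsetL_append, h]
    rw [qweight, qweight, h', ih h']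

lemma qweight_concat (pre u : List C) (b : C) :
    qweight R lam mu pre (u ++ [b]) =
      qweight R lam mu pre u * (lam b / muS mu (SsetL R (pre ++ u ++ [b]))) := by
  induction u generalizing pre with
  | nil => simp [qweight]
  | cons a v ih =>
    rw [List.cons_append, qweight, qweight, ih]
    have : pre ++ [a] ++ v ++ [b] = pre ++ (a :: v) ++ [b] := by simp
    rw [this]; ring

lemma key (hmu : ∀ s, 0 < mu s) (hScne : ∀ c : C, (Sc R c).Nonempty) :
    ∀ (w pre : List C) (c : C),
      ∑ k ∈ Finset.range (w.length + 1),
        muS mu (Sc R c \ SsetL R (pre ++ w.take k)) *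
          qweight R lam mu pre (w.take k ++ c :: w.drop k)
      = lam c * (qweight R lam mu pre w -
          muS mu (SsetL R pre) / muS mu (SsetL R (pre ++ [c])) *
            qweight R lam mu (pre ++ [c]) w) := by
  intro w
  induction w with
  | nil =>
    intro pre c
    have hsplit : muS mu (SsetL R (pre ++ [c])) =
        muS mu (SsetL R pre) + muS mu (Sc R c \ SsetL R pre) := by
      rw [SsetL_append, SsetL_singleton, muS_union_sdiff]
    have hpos := muS_appc_pos R mu hmu hScne pre c
    have hCd : muS mu (Sc R c \ SsetL R pre) =
        muS mu (SsetL R (pre ++ [c])) - muS mu (SsetL R pre) := by rw [hsplit]; ring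
    simp only [List.length_nil, Nat.zero_add, Finset.sum_range_one, List.take_nil,
      List.drop_nil, List.append_nil, List.nil_append, qweight, mul_one]
    rw [hCd]
    field_simp
  | cons a v ih =>
    intro pre c
    rw [Finset.sum_range_succ']
    simp only [List.length_cons, List.cons_append, List.take_succ_cons, List.drop_succ_cons, List.take_zero, List.drop_zero,
      List.nil_append, List.append_nil]
    -- k=0 term and shifted terms
    have hshift : ∀ k, pre ++ a :: v.take k = (pre ++ [a]) ++ v.take k := by
      intro k; simp
    have hq : ∀ k, qweight R lam mu pre (a :: (v.take k ++ c :: v.drop k)) =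
        (lam a / muS mu (SsetL R (pre ++ [a]))) *
          qweight R lam mu (pre ++ [a]) (v.take k ++ c :: v.drop k) := by
      intro k; rw [qweight]
    have hsum : ∑ k ∈ Finset.range (v.length + 1),
        muS mu (Sc R c \ SsetL R (pre ++ a :: v.take k)) *
          qweight R lam mu pre (a :: (v.take k ++ c :: v.drop k))
        = (lam a / muS mu (SsetL R (pre ++ [a]))) *
          ∑ k ∈ Finset.range (v.length + 1),
            muS mu (Sc R c \ SsetL R ((pre ++ [a]) ++ v.take k)) *
              qweight R lam mu (pre ++ [a]) (v.take k ++ c :: v.drop k) := by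
      rw [Finset.mul_sum]
      refine Finset.sum_congr rfl fun k _ => ?_
      rw [hq, hshift]; ring
    rw [hsum, ih (pre ++ [a]) c]
    -- now pure algebra
    have hPC : muS mu (SsetL R (pre ++ [c])) =
        muS mu (SsetL R pre) + muS mu (Sc R c \ SsetL R pre) := by
      rw [SsetL_append, SsetL_singleton, muS_union_sdiff]
    have hcomm : SsetL R (pre ++ [c] ++ [a]) = SsetL R (pre ++ [a] ++ [c]) := by
      rw [SsetL_append, SsetL_append, SsetL_append, SsetL_append]
      rw [Finset.union_right_comm]
    have hFc : qweight R lam mu (pre ++ [c] ++ [a]) v =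
        qweight R lam mu (pre ++ [a] ++ [c]) v := qweight_congr R lam mu hcomm v
    have hq1 : qweight R lam mu pre (c :: a :: v) =
        (lam c / muS mu (SsetL R (pre ++ [c]))) *
          ((lam a / muS mu (SsetL R (pre ++ [c] ++ [a]))) *
            qweight R lam mu (pre ++ [c] ++ [a]) v) := by
      rw [qweight, qweight]
    have hq2 : qweight R lam mu pre (a :: v) =
        (lam a / muS mu (SsetL R (pre ++ [a]))) *
          qweight R lam mu (pre ++ [a]) v := by rw [qweight]
    have hq3 : qweight R lam mu (pre ++ [c]) (a :: v) =
        (lam a / muS mu (SsetL R (pre ++ [c] ++ [a]))) *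
          qweight R lam mu (pre ++ [c] ++ [a]) v := by rw [qweight]
    have hCd : muS mu (Sc R c \ SsetL R pre) =
        muS mu (SsetL R (pre ++ [c])) - muS mu (SsetL R pre) := by rw [hPC]; ring
    rw [hq1, hq2, hq3, hFc, hcomm, hCd]
    have hC := muS_appc_pos R mu hmu hScne pre c
    have hA := muS_appc_pos R mu hmu hScne pre a
    have hD := muS_appc_pos R mu hmu hScne (pre ++ [a]) c
    have hD' : muS mu (SsetL R (pre ++ [a, c])) ≠ 0 := by
      have := hD.ne'; simpa [List.append_assoc] using this
    field_simp [hC.ne', hA.ne', hD']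
    ring

end Aux

/-- the unnormalized measure `π = qweight R lam mu []` satisfies the global
balance equations of the continuous-time Markov chain on lists of customer types whose
transitions are: append a customer of type `c` at rate `λ_c`, and remove the `ℓ`-th
customer at rate `μ_{S(c^ℓ) \ S({c^1,…,c^{ℓ-1}})}`. -/
theorem stmt4 {C S : Type*} [Fintype C] [Fintype S] [Nonempty C] [Nonempty S]
    [DecidableEq S]
    (R : C → S → Prop) [∀ c s, Decidable (R c s)]
    (lam : C → ℝ) (mu : S → ℝ)
    (hlam : ∀ c, 0 < lam c) (hmu : ∀ s, 0 < mu s)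
    (hScne : ∀ c : C, (Sc R c).Nonempty)
    (w : List C) :
    qweight R lam mu [] w * ((∑ c : C, lam c) + muS mu (SsetL R w)) =
      (match w.getLast? with
        | none => 0
        | some cL => lam cL * qweight R lam mu [] w.dropLast) +
      ∑ c : C, ∑ k ∈ Finset.range (w.length + 1),
        muS mu (Sc R c \ SsetL R (w.take k)) *
          qweight R lam mu [] (w.take k ++ c :: w.drop k) := by
  have hsum : ∑ c : C, ∑ k ∈ Finset.range (w.length + 1),
      muS mu (Sc R c \ SsetL R (w.take k)) *
        qweight R lam mu [] (w.take k ++ c :: w.drop k)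
      = (∑ c : C, lam c) * qweight R lam mu [] w := by
    rw [Finset.sum_mul]
    refine Finset.sum_congr rfl fun c _ => ?_
    have h := key R lam mu hmu hScne w [] c
    simp only [List.nil_append] at h
    rw [h, SsetL_nil]
    simp [muS]
  rw [hsum]
  rcases List.eq_nil_or_concat w with rfl | ⟨u, b, rfl⟩
  · simp [qweight, SsetL_nil, muS]
  · simp only [List.concat_eq_append] at hsum ⊢
    have hlast : (u ++ [b]).getLast? = some b := by
      simp [List.getLast?_concat]
    have hdrop : (u ++ [b]).dropLast = u := by simp
    rw [hlast, hdrop]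
    have hc := qweight_concat R lam mu [] u b
    simp only [List.nil_append] at hc
    have hpos := muS_appc_pos R mu hmu hScne u b
    rw [hc]
    field_simp
    ring
end

section
/- Let (z^1,…,z^M) be a perfect block, and let (z̃^M,…,z̃^1) denote its exchange transformation followed by reversal (where the exchange transformation swaps the entries of each matched pair and fixes unmatched server entries). Then (z̃^M,…,z̃^1) is again a perfect block, and for any probability assignment p : 𝒞 ∪ 𝒮 → [0,1] the product probabilities are equal: ∏_{k=1}^{M} p(z^k) = ∏_{k=1}^{M} p(z̃^k). In particular, if the entries of a random block of length M are i.i.d. with P(entry = c) = α_c and P(entry = s) = β_s, then a perfect block and its exchanged-reversed block have the same probability, namely κ_M · ∏_{c∈𝒞} α_c^{#c} · ∏_{s∈𝒮} β_s^{#s} conditional on the block being a perfect block, where #c, #s count the entries of each type and κ_M depends only on M. -/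
/-- FCFS directed matching of a finite word, scanning left to right.
`fcfsAux R rest n q` processes the remaining word `rest`, where `n` is the position of
the first entry of `rest` in the whole word, and `q` is the ordered queue of
still-unmatched customer entries (position, type) seen so far.  A server entry is matched
to the earliest unmatched compatible customer before it, if any; the output is the list
of matched pairs of positions `(customer position, server position)`. -/
def fcfsAux {C S : Type*} (R : C → S → Prop) [∀ c s, Decidable (R c s)] :
    List (C ⊕ S) → ℕ → List (ℕ × C) → List (ℕ × ℕ)
  | [], _, _ => []
  | Sum.inl c :: rest, n, q => fcfsAux R rest (n + 1) (q ++ [(n, c)])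
  | Sum.inr s :: rest, n, q =>
      match q.find? (fun p => decide (R p.2 s)) with
      | some p => (p.1, n) :: fcfsAux R rest (n + 1) (q.eraseP (fun p' => decide (R p'.2 s)))
      | none => fcfsAux R rest (n + 1) q

/-- The matched pairs of positions of the FCFS directed matching of the word `w`. -/
def fcfsMatching {C S : Type*} (R : C → S → Prop) [∀ c s, Decidable (R c s)]
    (w : List (C ⊕ S)) : List (ℕ × ℕ) := fcfsAux R w 0 []

/-- Number of customer entries of a word. -/
def numC {C S : Type*} (w : List (C ⊕ S)) : ℕ := w.countP (fun z => z.isLeft)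

/-- Number of server entries of a word. -/
def numS {C S : Type*} (w : List (C ⊕ S)) : ℕ := w.countP (fun z => z.isRight)

/-- Number of customer entries left unmatched by the FCFS directed matching. -/
def unmatchedC {C S : Type*} (R : C → S → Prop) [∀ c s, Decidable (R c s)]
    (w : List (C ⊕ S)) : ℕ := numC w - (fcfsMatching R w).length

/-- Number of server entries left unmatched by the FCFS directed matching. -/
def unmatchedS {C S : Type*} (R : C → S → Prop) [∀ c s, Decidable (R c s)]
    (w : List (C ⊕ S)) : ℕ := numS w - (fcfsMatching R w).length

/-- A word is a perfect block if its FCFS directed matching matches every customer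
entry. -/
def IsPerfect {C S : Type*} (R : C → S → Prop) [∀ c s, Decidable (R c s)]
    (w : List (C ⊕ S)) : Prop := (fcfsMatching R w).length = numC w

/-- The exchange transformation: the entries of each matched pair of the FCFS directed
matching are swapped, and unmatched entries are unchanged. -/
def exchange {C S : Type*} (R : C → S → Prop) [∀ c s, Decidable (R c s)] [Inhabited C]
    (w : List (C ⊕ S)) : List (C ⊕ S) :=
  (List.range w.length).map fun k =>
    match (fcfsMatching R w).find? (fun p => p.1 == k) with
    | some p => w.getD p.2 (Sum.inl default)
    | none =>
      match (fcfsMatching R w).find? (fun p => p.2 == k) with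
      | some p => w.getD p.1 (Sum.inl default)
      | none => w.getD k (Sum.inl default)

section Spec
variable {C S : Type*} (R : C → S → Prop) [∀ c s, Decidable (R c s)]

structure FSpec (w : List (C ⊕ S)) (N : ℕ × ℕ → Prop) : Prop where
  lt : ∀ i j, N (i, j) → i < j
  cust : ∀ i j, N (i, j) → ∃ c s, w[i]? = some (Sum.inl c) ∧ w[j]? = some (Sum.inr s) ∧ R c s
  injL : ∀ i j j', N (i, j) → N (i, j') → j = j'
  injR : ∀ i i' j, N (i, j) → N (i', j) → i = i'
  fcfs : ∀ i j c s, i < j → w[i]? = some (Sum.inl c) → w[j]? = some (Sum.inr s) → R c s →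
      (∃ j' ≤ j, N (i, j')) ∨ (∃ i' ≤ i, N (i', j))

variable {R}

lemma FSpec.step {w : List (C ⊕ S)} {N1 N2 : ℕ × ℕ → Prop}
    (h1 : FSpec R w N1) (h2 : FSpec R w N2) (j : ℕ)
    (IH : ∀ j' < j, ∀ i, N1 (i, j') ↔ N2 (i, j')) (i : ℕ) (h : N1 (i, j)) : N2 (i, j) := by
  obtain ⟨c, s, hwc, hws, hR⟩ := h1.cust i j h
  rcases h2.fcfs i j c s (h1.lt i j h) hwc hws hR with ⟨j', hj'le, hN2⟩ | ⟨i', hi'le, hN2⟩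
  · rcases lt_or_eq_of_le hj'le with hlt | rfl
    · exact absurd (h1.injL i j j' h ((IH j' hlt i).2 hN2)) (by omega)
    · exact hN2
  · rcases lt_or_eq_of_le hi'le with hlt | rfl
    · exfalso
      obtain ⟨c', s', hwc', hws', hR'⟩ := h2.cust i' j hN2
      rw [hws] at hws'
      obtain rfl : s = s' := by simpa using hws'
      rcases h1.fcfs i' j c' s (h2.lt i' j hN2) hwc' hws hR' with
        ⟨j'', hj''le, hN1⟩ | ⟨i'', hi''le, hN1⟩
      · rcases lt_or_eq_of_le hj''le with hlt2 | rfl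
        · exact absurd (h2.injL i' j'' j ((IH j'' hlt2 i').1 hN1) hN2) (by omega)
        · exact absurd (h1.injR i i' j'' h hN1) (by omega)
      · exact absurd (h1.injR i i'' j h hN1) (by omega)
    · exact hN2

lemma FSpec.unique {w : List (C ⊕ S)} {N1 N2 : ℕ × ℕ → Prop}
    (h1 : FSpec R w N1) (h2 : FSpec R w N2) : ∀ p, N1 p ↔ N2 p := by
  have main : ∀ j i, N1 (i, j) ↔ N2 (i, j) := by
    intro j
    induction j using Nat.strong_induction_on with
    | _ j IH =>
      intro i
      constructor
      · exact h1.step h2 j (fun j' hj' i' => IH j' hj' i') i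
      · exact h2.step h1 j (fun j' hj' i' => (IH j' hj' i').symm) i
  exact fun p => main p.2 p.1
end Spec

section Helpers
variable {α : Type*}

lemma find?_erase_helper (pred : α → Bool) (key : α → ℕ) :
    ∀ (q : List α) (p : α), q.find? pred = some p → ((q.map key).Nodup) →
      p ∈ q ∧ (∀ x ∈ q, key x ≠ key p → x ∈ q.eraseP pred) ∧
      (∀ x ∈ q.eraseP pred, x ∈ q ∧ key x ≠ key p) := by
  intro q
  induction q with
  | nil => intro p h; simp at h
  | cons a t IH =>
    intro p h hnd
    by_cases ha : pred a
    · rw [List.find?_cons_of_pos ha] at h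
      obtain rfl : a = p := by simpa using h
      rw [List.eraseP_cons_of_pos ha]
      simp only [List.map_cons, List.nodup_cons, List.mem_map] at hnd
      refine ⟨List.mem_cons_self, ?_, ?_⟩
      · intro x hx hne
        rcases List.mem_cons.1 hx with rfl | hx
        · exact absurd rfl hne
        · exact hx
      · intro x hx
        refine ⟨List.mem_cons_of_mem _ hx, ?_⟩
        intro hkey
        exact hnd.1 ⟨x, hx, hkey⟩
    · rw [List.find?_cons_of_neg (show ¬ pred a = true from by simpa using ha)] at h
      rw [List.eraseP_cons_of_neg (by simpa using ha)]
      simp only [List.map_cons, List.nodup_cons, List.mem_map] at hnd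
      obtain ⟨hp, h2, h3⟩ := IH p h hnd.2
      have hka : key a ≠ key p := fun hk => hnd.1 ⟨p, hp, hk.symm⟩
      refine ⟨List.mem_cons_of_mem _ hp, ?_, ?_⟩
      · intro x hx hne
        rcases List.mem_cons.1 hx with rfl | hx
        · exact List.mem_cons_self
        · exact List.mem_cons_of_mem _ (h2 x hx hne)
      · intro x hx
        rcases List.mem_cons.1 hx with rfl | hx
        · exact ⟨List.mem_cons_self, hka⟩
        · obtain ⟨h4, h5⟩ := h3 x hx
          exact ⟨List.mem_cons_of_mem _ h4, h5⟩

lemma find?_min (pred : α → Bool) (key : α → ℕ) :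
    ∀ (q : List α) (p : α), q.find? pred = some p → q.Pairwise (fun a b => key a < key b) →
      ∀ x ∈ q, pred x → key p ≤ key x := by
  intro q
  induction q with
  | nil => intro p h; simp at h
  | cons a t IH =>
    intro p h hsort x hx hpx
    by_cases ha : pred a
    · rw [List.find?_cons_of_pos ha] at h
      obtain rfl : a = p := by simpa using h
      rcases List.mem_cons.1 hx with rfl | hx
      · exact le_refl _
      · exact le_of_lt ((List.pairwise_cons.1 hsort).1 x hx)
    · rw [List.find?_cons_of_neg (show ¬ pred a = true from by simpa using ha)] at h
      rcases List.mem_cons.1 hx with rfl | hx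
      · exact absurd hpx ha
      · exact IH p h (List.pairwise_cons.1 hsort).2 x hx hpx
end Helpers

section Aux
variable {C S : Type*} {R : C → S → Prop} [∀ c s, Decidable (R c s)]

lemma fcfsAux_spec (w : List (C ⊕ S)) :
    ∀ (rest : List (C ⊕ S)) (n : ℕ) (q : List (ℕ × C)),
    (∀ k, rest[k]? = w[n + k]?) →
    q.Pairwise (fun a b => a.1 < b.1) →
    (∀ x ∈ q, x.1 < n ∧ w[x.1]? = some (Sum.inl x.2)) →
    (∀ pr ∈ fcfsAux R rest n q, n ≤ pr.2 ∧ pr.1 < pr.2 ∧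
       (pr.1 ∈ q.map Prod.fst ∨ n ≤ pr.1) ∧
       ∃ c s, w[pr.1]? = some (Sum.inl c) ∧ w[pr.2]? = some (Sum.inr s) ∧ R c s) ∧
    (fcfsAux R rest n q).Pairwise (fun a b => a.2 < b.2) ∧
    ((fcfsAux R rest n q).map Prod.fst).Nodup ∧
    (∀ i j c s, i < j → n ≤ j → w[i]? = some (Sum.inl c) → w[j]? = some (Sum.inr s) →
       R c s → ((∃ c', (i, c') ∈ q) ∨ n ≤ i) →
       (∃ j' ≤ j, (i, j') ∈ fcfsAux R rest n q) ∨ (∃ i' ≤ i, (i', j) ∈ fcfsAux R rest n q)) := by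
  intro rest
  induction rest with
  | nil =>
    intro n q hget _ _
    refine ⟨by simp [fcfsAux], by simp [fcfsAux], by simp [fcfsAux], ?_⟩
    intro i j c s hij hnj hwi hwj hR hcond
    exfalso
    have h1 := hget (j - n)
    rw [show n + (j - n) = j by omega] at h1
    rw [hwj] at h1
    simp at h1
  | cons z rest' IH =>
    intro n q hget hsort hq2
    have hget' : ∀ k, rest'[k]? = w[(n + 1) + k]? := by
      intro k
      have := hget (k + 1)
      simpa [show n + (k + 1) = (n + 1) + k by omega] using this
    have hn0 : (z :: rest')[0]? = w[n]? := by simpa using hget 0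
    cases z with
    | inl c₀ =>
      have hn : w[n]? = some (Sum.inl c₀) := by simpa using hn0.symm
      have hF : fcfsAux R (Sum.inl c₀ :: rest') n q = fcfsAux R rest' (n + 1) (q ++ [(n, c₀)]) := rfl
      have hsort' : (q ++ [(n, c₀)]).Pairwise (fun a b => a.1 < b.1) := by
        rw [List.pairwise_append]
        refine ⟨hsort, by simp, ?_⟩
        intro a ha b hb
        simp only [List.mem_singleton] at hb
        subst hb
        exact (hq2 a ha).1
      have hq2' : ∀ x ∈ q ++ [(n, c₀)], x.1 < n + 1 ∧ w[x.1]? = some (Sum.inl x.2) := by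
        intro x hx
        rcases List.mem_append.1 hx with hx | hx
        · have := (hq2 x hx).1
          exact ⟨by omega, (hq2 x hx).2⟩
        · simp only [List.mem_singleton] at hx
          subst hx
          exact ⟨Nat.lt_succ_self n, hn⟩
      obtain ⟨hA, hB, hC, hD⟩ := IH (n + 1) (q ++ [(n, c₀)]) hget' hsort' hq2'
      rw [hF]
      refine ⟨?_, hB, hC, ?_⟩
      · intro pr hpr
        obtain ⟨h1, h2, h3, h4⟩ := hA pr hpr
        refine ⟨by omega, h2, ?_, h4⟩
        rcases h3 with h3 | h3
        · simp only [List.map_append, List.mem_append, List.map_cons, List.mem_singleton] at h3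
          rcases h3 with h3 | h3
          · exact Or.inl h3
          · simp at h3; omega
        · exact Or.inr (by omega)
      · intro i j c s hij hnj hwi hwj hR hcond
        have hjn : j ≠ n := by
          rintro rfl
          rw [hn] at hwj
          simp at hwj
        refine hD i j c s hij (by omega) hwi hwj hR ?_
        rcases hcond with ⟨c', hc'⟩ | hni
        · exact Or.inl ⟨c', List.mem_append_left _ hc'⟩
        · rcases Nat.eq_or_lt_of_le hni with rfl | hlt
          · refine Or.inl ⟨c₀, List.mem_append_right _ (by simp)⟩
          · exact Or.inr hlt
    | inr s₀ =>
      have hn : w[n]? = some (Sum.inr s₀) := by simpa using hn0.symm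
      have hqnodup : (q.map Prod.fst).Nodup := by
        rw [List.Nodup, List.pairwise_map]
        exact hsort.imp (fun h => Nat.ne_of_lt h)
      rcases hfind : q.find? (fun p => decide (R p.2 s₀)) with _ | p
      · -- no compatible customer in queue
        have hF : fcfsAux R (Sum.inr s₀ :: rest') n q = fcfsAux R rest' (n + 1) q := by
          simp [fcfsAux, hfind]
        have hq2' : ∀ x ∈ q, x.1 < n + 1 ∧ w[x.1]? = some (Sum.inl x.2) := by
          intro x hx
          have := hq2 x hx
          exact ⟨by omega, this.2⟩
        obtain ⟨hA, hB, hC, hD⟩ := IH (n + 1) q hget' hsort hq2'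
        rw [hF]
        refine ⟨?_, hB, hC, ?_⟩
        · intro pr hpr
          obtain ⟨h1, h2, h3, h4⟩ := hA pr hpr
          exact ⟨by omega, h2, h3.imp id (by omega), h4⟩
        · intro i j c s hij hnj hwi hwj hR hcond
          have hjn : j ≠ n := by
            rintro rfl
            exfalso
            -- then s = s₀ and i < n, so (i, c) ∈ q is compatible, contradicting hfind
            rw [hn] at hwj
            have hs : s = s₀ := by simpa using hwj.symm
            subst hs
            rcases hcond with ⟨c', hc'⟩ | hni
            · have h2 := (hq2 _ hc').2
              rw [hwi] at h2
              have hc : c' = c := by simpa using h2.symm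
              rw [hc] at hc' 
              have := List.find?_eq_none.1 hfind _ hc'
              simp only [decide_eq_true_eq] at this
              exact this hR
            · omega
          refine hD i j c s hij (by omega) hwi hwj hR ?_
          rcases hcond with ⟨c', hc'⟩ | hni
          · exact Or.inl ⟨c', hc'⟩
          · have hin : i ≠ n := by
              rintro rfl
              rw [hn] at hwi
              simp at hwi
            exact Or.inr (by omega)
      · -- matched with p
        have hF : fcfsAux R (Sum.inr s₀ :: rest') n q =
            (p.1, n) :: fcfsAux R rest' (n + 1) (q.eraseP (fun p' => decide (R p'.2 s₀))) := by
          simp [fcfsAux, hfind]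
        obtain ⟨hpq, hmem_erase, herase_mem⟩ :=
          find?_erase_helper (fun p' => decide (R p'.2 s₀)) Prod.fst q p hfind hqnodup
        have hpR : R p.2 s₀ := by simpa using List.find?_some hfind
        have hp1 : p.1 < n := (hq2 p hpq).1
        have hpw : w[p.1]? = some (Sum.inl p.2) := (hq2 p hpq).2
        set q'' := q.eraseP (fun p' => decide (R p'.2 s₀)) with hq''
        have hsub : ∀ x ∈ q'', x ∈ q := fun x hx => (herase_mem x hx).1
        have hsort'' : q''.Pairwise (fun a b => a.1 < b.1) :=
          hsort.sublist List.eraseP_sublist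
        have hq2'' : ∀ x ∈ q'', x.1 < n + 1 ∧ w[x.1]? = some (Sum.inl x.2) := by
          intro x hx
          have := hq2 x (hsub x hx)
          exact ⟨by omega, this.2⟩
        obtain ⟨hA, hB, hC, hD⟩ := IH (n + 1) q'' hget' hsort'' hq2''
        rw [hF]
        refine ⟨?_, ?_, ?_, ?_⟩
        · intro pr hpr
          rcases List.mem_cons.1 hpr with rfl | hpr
          · exact ⟨le_refl n, hp1, Or.inl (List.mem_map.2 ⟨p, hpq, rfl⟩),
              p.2, s₀, hpw, hn, hpR⟩
          · obtain ⟨h1, h2, h3, h4⟩ := hA pr hpr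
            refine ⟨by omega, h2, ?_, h4⟩
            rcases h3 with h3 | h3
            · obtain ⟨x, hx, hxe⟩ := List.mem_map.1 h3
              exact Or.inl (List.mem_map.2 ⟨x, hsub x hx, hxe⟩)
            · exact Or.inr (by omega)
        · rw [List.pairwise_cons]
          exact ⟨fun pr hpr => (hA pr hpr).1, hB⟩
        · rw [List.map_cons, List.nodup_cons]
          refine ⟨?_, hC⟩
          intro hmem
          obtain ⟨pr, hpr, hpre⟩ := List.mem_map.1 hmem
          obtain ⟨h1, h2, h3, h4⟩ := hA pr hpr
          rcases h3 with h3 | h3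
          · obtain ⟨x, hx, hxe⟩ := List.mem_map.1 h3
            exact (herase_mem x hx).2 (by rw [hxe, hpre])
          · omega
        · intro i j c s hij hnj hwi hwj hR hcond
          rcases Nat.eq_or_lt_of_le hnj with rfl | hjlt
          · -- j = n : server s₀ matched p, which is earliest compatible
            rw [hn] at hwj
            have hs : s = s₀ := by simpa using hwj.symm
            subst hs
            have hin' : i < n := hij
            rcases hcond with ⟨c', hc'⟩ | hni
            · have h2 := (hq2 _ hc').2
              rw [hwi] at h2
              have hc : c' = c := by simpa using h2.symm
              rw [hc] at hc' 
              have hple : p.1 ≤ i :=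
                find?_min _ Prod.fst q p hfind hsort (i, c) hc' (by simpa using hR)
              exact Or.inr ⟨p.1, hple, List.mem_cons_self⟩
            · omega
          · -- j ≥ n + 1
            rcases hcond with ⟨c', hc'⟩ | hni
            · have h2 := (hq2 _ hc').2
              rw [hwi] at h2
              have hc : c' = c := by simpa using h2.symm
              rw [hc] at hc' 
              by_cases hip : i = p.1
              · subst hip
                exact Or.inl ⟨n, by omega, List.mem_cons_self⟩
              · have hiq'' : (i, c) ∈ q'' := hmem_erase (i, c) hc' hip
                rcases hD i j c s hij (by omega) hwi hwj hR (Or.inl ⟨c, hiq''⟩) with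
                  ⟨j', hj', hm⟩ | ⟨i', hi', hm⟩
                · exact Or.inl ⟨j', hj', List.mem_cons_of_mem _ hm⟩
                · exact Or.inr ⟨i', hi', List.mem_cons_of_mem _ hm⟩
            · have hin : i ≠ n := by
                rintro rfl
                rw [hn] at hwi
                simp at hwi
              rcases hD i j c s hij (by omega) hwi hwj hR (Or.inr (by omega)) with
                ⟨j', hj', hm⟩ | ⟨i', hi', hm⟩
              · exact Or.inl ⟨j', hj', List.mem_cons_of_mem _ hm⟩
              · exact Or.inr ⟨i', hi', List.mem_cons_of_mem _ hm⟩
end Aux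

section Matching
variable {C S : Type*} {R : C → S → Prop} [∀ c s, Decidable (R c s)]

lemma mem_inj_of_nodup_map {α β : Type*} (f : α → β) {l : List α} (h : (l.map f).Nodup)
    {a b : α} (ha : a ∈ l) (hb : b ∈ l) (hf : f a = f b) : a = b := by
  by_contra hne
  rw [List.Nodup, List.pairwise_map] at h
  exact hne (List.inj_on_of_nodup_map (by rwa [List.Nodup, List.pairwise_map]) ha hb hf)

lemma fcfsMatching_spec (w : List (C ⊕ S)) :
    (∀ pr ∈ fcfsMatching R w, pr.1 < pr.2 ∧
       ∃ c s, w[pr.1]? = some (Sum.inl c) ∧ w[pr.2]? = some (Sum.inr s) ∧ R c s) ∧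
    (fcfsMatching R w).Pairwise (fun a b => a.2 < b.2) ∧
    ((fcfsMatching R w).map Prod.fst).Nodup ∧
    FSpec R w (fun pr => pr ∈ fcfsMatching R w) := by
  obtain ⟨hA, hB, hC, hD⟩ := fcfsAux_spec (R := R) w w 0 [] (by simp) (by simp) (by simp)
  rw [fcfsMatching] at *
  have hsndnd : ((fcfsAux R w 0 []).map Prod.snd).Nodup := by
    rw [List.Nodup, List.pairwise_map]
    exact hB.imp (fun h => Nat.ne_of_lt h)
  refine ⟨fun pr hpr => ⟨(hA pr hpr).2.1, (hA pr hpr).2.2.2⟩, hB, hC, ?_⟩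
  constructor
  · intro i j h
    exact (hA (i, j) h).2.1
  · intro i j h
    exact (hA (i, j) h).2.2.2
  · intro i j j' h h'
    have := mem_inj_of_nodup_map Prod.fst hC h h' rfl
    exact congrArg Prod.snd this
  · intro i i' j h h'
    have := mem_inj_of_nodup_map Prod.snd hsndnd h h' rfl
    exact congrArg Prod.fst this
  · intro i j c s hij hwi hwj hR
    exact hD i j c s hij (Nat.zero_le _) hwi hwj hR (Or.inr (Nat.zero_le _))

lemma countP_eq_length_filter_range {X : Type*} (w : List X) (pr : X → Bool) :
    w.countP pr = ((List.range w.length).filter (fun k => (w[k]?).any pr)).length := by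
  induction w with
  | nil => simp
  | cons a t IH =>
    rw [List.countP_cons, IH, List.length_cons, List.range_succ_eq_map, List.filter_cons]
    have h1 : List.filter (fun k => (((a :: t)[k]?).any pr)) (List.map Nat.succ (List.range t.length))
        = List.map Nat.succ (List.filter (fun k => ((t[k]?).any pr)) (List.range t.length)) := by
      rw [List.filter_map]
      congr 1
    simp only [List.getElem?_cons_zero, Option.any_some]
    rw [h1]
    by_cases hpa : pr a <;> simp [hpa]

lemma perm_of_nodup_subset_length {α : Type*} [DecidableEq α] {l1 l2 : List α}
    (h1 : l1.Nodup) (h2 : l2.Nodup) (hsub : ∀ x ∈ l1, x ∈ l2) (hlen : l2.length ≤ l1.length) :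
    ∀ x, x ∈ l1 ↔ x ∈ l2 := by
  have hfin : l1.toFinset = l2.toFinset := by
    apply Finset.eq_of_subset_of_card_le
    · intro x hx
      rw [List.mem_toFinset] at *
      exact hsub x (by simpa using hx)
    · rw [List.toFinset_card_of_nodup h1, List.toFinset_card_of_nodup h2]
      exact hlen
  intro x
  rw [← List.mem_toFinset, ← List.mem_toFinset (l := l2), hfin]

lemma map_getD_range {α : Type*} (w : List α) (d : α) :
    (List.range w.length).map (fun k => w.getD k d) = w := by
  apply List.ext_getElem (by simp)
  intro n h1 h2
  simp [List.getD_eq_getElem w d h2, List.getElem?_eq_getElem h2]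
end Matching

section Perfect
variable {C S : Type*} [Inhabited C] {R : C → S → Prop} [∀ c s, Decidable (R c s)]

lemma lt_of_getElem?_some {α : Type*} {w : List α} {k : ℕ} {x : α} (h : w[k]? = some x) :
    k < w.length := by
  by_contra hk
  rw [List.getElem?_eq_none (by omega)] at h
  cases h

lemma cover_of_perfect {w : List (C ⊕ S)} (hw : IsPerfect R w) :
    ∀ k c, w[k]? = some (Sum.inl c) → ∃ pr ∈ fcfsMatching R w, pr.1 = k := by
  obtain ⟨hA, _hB, hC, _⟩ := fcfsMatching_spec (R := R) w
  set F := fcfsMatching R w with hF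
  set cpos := (List.range w.length).filter (fun k => (w[k]?).any Sum.isLeft) with hcpos
  have hnd1 : (F.map Prod.fst).Nodup := hC
  have hnd2 : cpos.Nodup := (List.nodup_range).filter _
  have hsub : ∀ x ∈ F.map Prod.fst, x ∈ cpos := by
    intro x hx
    obtain ⟨pr, hpr, rfl⟩ := List.mem_map.1 hx
    obtain ⟨_, c, s, hwc, _, _⟩ := hA pr hpr
    rw [hcpos, List.mem_filter, List.mem_range]
    exact ⟨lt_of_getElem?_some hwc, by rw [hwc]; simp⟩
  have hlen : cpos.length ≤ (F.map Prod.fst).length := by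
    rw [List.length_map, hw]
    rw [numC, countP_eq_length_filter_range]
  have hiff := perm_of_nodup_subset_length hnd1 hnd2 hsub hlen
  intro k c hk
  have hkcpos : k ∈ cpos := by
    rw [hcpos, List.mem_filter, List.mem_range]
    exact ⟨lt_of_getElem?_some hk, by rw [hk]; simp⟩
  obtain ⟨pr, hpr, hpre⟩ := List.mem_map.1 ((hiff k).2 hkcpos)
  exact ⟨pr, hpr, hpre⟩

lemma exchange_length (w : List (C ⊕ S)) : (exchange R w).length = w.length := by
  simp [exchange]

lemma find_fst_eq {w : List (C ⊕ S)} {pr : ℕ × ℕ} (hpr : pr ∈ fcfsMatching R w) :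
    (fcfsMatching R w).find? (fun p => p.1 == pr.1) = some pr := by
  obtain ⟨_, _, hC, _⟩ := fcfsMatching_spec (R := R) w
  rcases h : (fcfsMatching R w).find? (fun p => p.1 == pr.1) with _ | pr'
  · exact absurd (by simp : ((fun p : ℕ × ℕ => p.1 == pr.1) pr) = true)
      (List.find?_eq_none.1 h pr hpr)
  · have h1 : pr' ∈ fcfsMatching R w := List.mem_of_find?_eq_some h
    have h2 : pr'.1 = pr.1 := by simpa using List.find?_some h
    rw [← mem_inj_of_nodup_map Prod.fst hC h1 hpr h2, h2]
    exact h

lemma find_snd_eq {w : List (C ⊕ S)} {pr : ℕ × ℕ} (hpr : pr ∈ fcfsMatching R w) :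
    (fcfsMatching R w).find? (fun p => p.2 == pr.2) = some pr := by
  obtain ⟨_, hB, _, _⟩ := fcfsMatching_spec (R := R) w
  have hnd : ((fcfsMatching R w).map Prod.snd).Nodup := by
    rw [List.Nodup, List.pairwise_map]
    exact hB.imp (fun h => Nat.ne_of_lt h)
  rcases h : (fcfsMatching R w).find? (fun p => p.2 == pr.2) with _ | pr'
  · exact absurd (by simp : ((fun p : ℕ × ℕ => p.2 == pr.2) pr) = true)
      (List.find?_eq_none.1 h pr hpr)
  · have h1 : pr' ∈ fcfsMatching R w := List.mem_of_find?_eq_some h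
    have h2 : pr'.2 = pr.2 := by simpa using List.find?_some h
    rw [← mem_inj_of_nodup_map Prod.snd hnd h1 hpr h2, h2]
    exact h

lemma find_fst_of_snd_eq_none {w : List (C ⊕ S)} {pr : ℕ × ℕ} (hpr : pr ∈ fcfsMatching R w) :
    (fcfsMatching R w).find? (fun p => p.1 == pr.2) = none := by
  obtain ⟨hA, _, _, _⟩ := fcfsMatching_spec (R := R) w
  rw [List.find?_eq_none]
  intro x hx
  obtain ⟨_, c, s, hwc, _, _⟩ := hA x hx
  obtain ⟨_, c', s', _, hws', _⟩ := hA pr hpr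
  simp only [beq_iff_eq]
  intro hxe
  rw [hxe, hws'] at hwc
  simp at hwc

lemma exchange_get_fst {w : List (C ⊕ S)} {pr : ℕ × ℕ} (hpr : pr ∈ fcfsMatching R w) :
    (exchange R w)[pr.1]? = w[pr.2]? := by
  obtain ⟨hA, _, _, _⟩ := fcfsMatching_spec (R := R) w
  obtain ⟨_, c, s, hwc, hws, _⟩ := hA pr hpr
  have h1 : pr.1 < w.length := lt_of_getElem?_some hwc
  have h2 : pr.2 < w.length := lt_of_getElem?_some hws
  rw [exchange, List.getElem?_map, List.getElem?_range h1]
  rw [Option.map_some]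
  rw [find_fst_eq hpr]
  show some (w.getD pr.2 (Sum.inl default)) = w[pr.2]?
  rw [List.getD_eq_getElem w _ h2, List.getElem?_eq_getElem h2]

lemma exchange_get_snd {w : List (C ⊕ S)} {pr : ℕ × ℕ} (hpr : pr ∈ fcfsMatching R w) :
    (exchange R w)[pr.2]? = w[pr.1]? := by
  obtain ⟨hA, _, _, _⟩ := fcfsMatching_spec (R := R) w
  obtain ⟨_, c, s, hwc, hws, _⟩ := hA pr hpr
  have h1 : pr.1 < w.length := lt_of_getElem?_some hwc
  have h2 : pr.2 < w.length := lt_of_getElem?_some hws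
  rw [exchange, List.getElem?_map, List.getElem?_range h2]
  rw [Option.map_some]
  rw [find_fst_of_snd_eq_none hpr, find_snd_eq hpr]
  show some (w.getD pr.1 (Sum.inl default)) = w[pr.1]?
  rw [List.getD_eq_getElem w _ h1, List.getElem?_eq_getElem h1]

lemma exchange_get_other {w : List (C ⊕ S)} {k : ℕ} (hk : k < w.length)
    (h : ∀ pr ∈ fcfsMatching R w, pr.1 ≠ k ∧ pr.2 ≠ k) :
    (exchange R w)[k]? = w[k]? := by
  have hf1 : (fcfsMatching R w).find? (fun p => p.1 == k) = none := by
    rw [List.find?_eq_none]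
    intro x hx
    simpa using (h x hx).1
  have hf2 : (fcfsMatching R w).find? (fun p => p.2 == k) = none := by
    rw [List.find?_eq_none]
    intro x hx
    simpa using (h x hx).2
  rw [exchange, List.getElem?_map, List.getElem?_range hk, Option.map_some]
  rw [hf1, hf2]
  show some (w.getD k (Sum.inl default)) = w[k]?
  rw [List.getD_eq_getElem w _ hk, List.getElem?_eq_getElem hk]
end Perfect

section Rev
variable {C S : Type*} [Inhabited C] {R : C → S → Prop} [∀ c s, Decidable (R c s)]

lemma exchange_cust {w : List (C ⊕ S)} (hw : IsPerfect R w) {k : ℕ} {c : C}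
    (h : (exchange R w)[k]? = some (Sum.inl c)) :
    ∃ pr ∈ fcfsMatching R w, k = pr.2 ∧ w[pr.1]? = some (Sum.inl c) := by
  obtain ⟨hA, _, _, _⟩ := fcfsMatching_spec (R := R) w
  have hk : k < w.length := by
    have := lt_of_getElem?_some h
    rwa [exchange_length] at this
  by_cases h1 : ∃ pr ∈ fcfsMatching R w, pr.1 = k
  · obtain ⟨pr, hpr, rfl⟩ := h1
    rw [exchange_get_fst hpr] at h
    obtain ⟨_, c', s', _, hws, _⟩ := hA pr hpr
    rw [hws] at h
    simp at h
  · by_cases h2 : ∃ pr ∈ fcfsMatching R w, pr.2 = k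
    · obtain ⟨pr, hpr, rfl⟩ := h2
      rw [exchange_get_snd hpr] at h
      exact ⟨pr, hpr, rfl, h⟩
    · rw [exchange_get_other hk ?_] at h
      · exact absurd (cover_of_perfect hw k c h) (by push_neg at h1 ⊢; exact fun pr hpr => h1 pr hpr)
      · intro pr hpr
        push_neg at h1 h2
        exact ⟨h1 pr hpr, h2 pr hpr⟩

lemma exchange_serv {w : List (C ⊕ S)} {k : ℕ} {s : S}
    (h : (exchange R w)[k]? = some (Sum.inr s)) :
    (∃ pr ∈ fcfsMatching R w, k = pr.1 ∧ w[pr.2]? = some (Sum.inr s)) ∨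
      ((∀ pr ∈ fcfsMatching R w, pr.1 ≠ k ∧ pr.2 ≠ k) ∧ w[k]? = some (Sum.inr s)) := by
  obtain ⟨hA, _, _, _⟩ := fcfsMatching_spec (R := R) w
  have hk : k < w.length := by
    have := lt_of_getElem?_some h
    rwa [exchange_length] at this
  by_cases h1 : ∃ pr ∈ fcfsMatching R w, pr.1 = k
  · obtain ⟨pr, hpr, rfl⟩ := h1
    rw [exchange_get_fst hpr] at h
    exact Or.inl ⟨pr, hpr, rfl, h⟩
  · by_cases h2 : ∃ pr ∈ fcfsMatching R w, pr.2 = k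
    · obtain ⟨pr, hpr, rfl⟩ := h2
      rw [exchange_get_snd hpr] at h
      obtain ⟨_, c', s', hwc, _, _⟩ := hA pr hpr
      rw [hwc] at h
      simp at h
    · push_neg at h1 h2
      have hun : ∀ pr ∈ fcfsMatching R w, pr.1 ≠ k ∧ pr.2 ≠ k :=
        fun pr hpr => ⟨h1 pr hpr, h2 pr hpr⟩
      rw [exchange_get_other hk hun] at h
      exact Or.inr ⟨hun, h⟩

lemma wrev_get {w : List (C ⊕ S)} {k : ℕ} (hk : k < w.length) :
    (exchange R w).reverse[k]? = (exchange R w)[w.length - 1 - k]? := by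
  have h1 : k < (exchange R w).length := by rwa [exchange_length]
  rw [List.getElem?_reverse h1, exchange_length]

lemma rev_spec {w : List (C ⊕ S)} (hw : IsPerfect R w) :
    FSpec R (exchange R w).reverse
      (fun pr => pr ∈ (fcfsMatching R w).map
        (fun q => (w.length - 1 - q.2, w.length - 1 - q.1))) := by
  obtain ⟨hA, hB, hC, hspec⟩ := fcfsMatching_spec (R := R) w
  set M := w.length with hM
  set F := fcfsMatching R w with hF
  have hsndnd : (F.map Prod.snd).Nodup := by
    rw [List.Nodup, List.pairwise_map]
    exact hB.imp (fun h => Nat.ne_of_lt h)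
  have hbounds : ∀ pr ∈ F, pr.1 < pr.2 ∧ pr.2 < M := by
    intro pr hpr
    obtain ⟨hlt, c, s, hwc, hws, _⟩ := hA pr hpr
    exact ⟨hlt, lt_of_getElem?_some hws⟩
  have hrevlen : (exchange R w).reverse.length = M := by
    rw [List.length_reverse, exchange_length]
  constructor
  · intro a b hmem
    obtain ⟨q, hq, heq⟩ := List.mem_map.1 hmem
    rw [Prod.ext_iff] at heq
    obtain ⟨h1, h2⟩ := heq
    obtain ⟨hlt, hbd⟩ := hbounds q hq
    simp only at h1 h2
    omega
  · intro a b hmem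
    obtain ⟨q, hq, heq⟩ := List.mem_map.1 hmem
    rw [Prod.ext_iff] at heq
    obtain ⟨h1, h2⟩ := heq
    simp only at h1 h2
    obtain ⟨hlt, hbd⟩ := hbounds q hq
    obtain ⟨_, c, s, hwc, hws, hR⟩ := hA q hq
    refine ⟨c, s, ?_, ?_, hR⟩
    · rw [wrev_get (by omega), show M - 1 - a = q.2 by omega, exchange_get_snd hq, hwc]
    · rw [wrev_get (by omega), show M - 1 - b = q.1 by omega, exchange_get_fst hq, hws]
  · intro a b b' hmem hmem'
    obtain ⟨q, hq, heq⟩ := List.mem_map.1 hmem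
    obtain ⟨q', hq', heq'⟩ := List.mem_map.1 hmem'
    rw [Prod.ext_iff] at heq heq'
    obtain ⟨h1, h2⟩ := heq
    obtain ⟨h1', h2'⟩ := heq'
    simp only at h1 h2 h1' h2'
    obtain ⟨hlt, hbd⟩ := hbounds q hq
    obtain ⟨hlt', hbd'⟩ := hbounds q' hq'
    have hq2 : q.2 = q'.2 := by omega
    have : q = q' := mem_inj_of_nodup_map Prod.snd hsndnd hq hq' hq2
    subst this
    omega
  · intro a a' b hmem hmem'
    obtain ⟨q, hq, heq⟩ := List.mem_map.1 hmem
    obtain ⟨q', hq', heq'⟩ := List.mem_map.1 hmem'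
    rw [Prod.ext_iff] at heq heq'
    obtain ⟨h1, h2⟩ := heq
    obtain ⟨h1', h2'⟩ := heq'
    simp only at h1 h2 h1' h2'
    obtain ⟨hlt, hbd⟩ := hbounds q hq
    obtain ⟨hlt', hbd'⟩ := hbounds q' hq'
    have hq1 : q.1 = q'.1 := by omega
    have : q = q' := mem_inj_of_nodup_map Prod.fst hC hq hq' hq1
    subst this
    omega
  · intro a b c s hab hwa hwb hR
    have hbM : b < M := by
      have := lt_of_getElem?_some hwb
      rwa [hrevlen] at this
    have haM : a < M := by omega
    rw [wrev_get haM] at hwa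
    rw [wrev_get hbM] at hwb
    obtain ⟨pr, hpr, ha', hwc⟩ := exchange_cust hw hwa
    obtain ⟨hplt, hpbd⟩ := hbounds pr hpr
    rcases exchange_serv hwb with ⟨qr, hqr, hb', hws⟩ | ⟨hun, hws⟩
    · obtain ⟨hqlt, hqbd⟩ := hbounds qr hqr
      by_cases hc1 : M - 1 - pr.1 ≤ b
      · refine Or.inl ⟨M - 1 - pr.1, hc1, List.mem_map.2 ⟨pr, hpr, ?_⟩⟩
        rw [Prod.ext_iff]
        exact ⟨by omega, rfl⟩
      · by_cases hc2 : M - 1 - qr.2 ≤ a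
        · refine Or.inr ⟨M - 1 - qr.2, hc2, List.mem_map.2 ⟨qr, hqr, ?_⟩⟩
          rw [Prod.ext_iff]
          exact ⟨rfl, by omega⟩
        · exfalso
          have h3 : pr.1 < qr.1 := by omega
          have h4 : qr.2 < pr.2 := by omega
          have h5 : pr.1 < qr.2 := by omega
          rcases hspec.fcfs pr.1 qr.2 c s h5 hwc hws hR with ⟨j', hj', hm⟩ | ⟨i', hi', hm⟩
          · have : (pr.1, j') = pr := mem_inj_of_nodup_map Prod.fst hC hm hpr rfl
            have : j' = pr.2 := congrArg Prod.snd this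
            omega
          · have : (i', qr.2) = qr := mem_inj_of_nodup_map Prod.snd hsndnd hm hqr rfl
            have : i' = qr.1 := congrArg Prod.fst this
            omega
    · have hne : pr.1 ≠ M - 1 - b := (hun pr hpr).1
      have hgt : M - 1 - b < pr.1 := by
        rcases Nat.lt_or_ge pr.1 (M - 1 - b) with hlt2 | hge
        · exfalso
          rcases hspec.fcfs pr.1 (M - 1 - b) c s hlt2 hwc hws hR with
            ⟨j', hj', hm⟩ | ⟨i', hi', hm⟩
          · have : (pr.1, j') = pr := mem_inj_of_nodup_map Prod.fst hC hm hpr rfl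
            have : j' = pr.2 := congrArg Prod.snd this
            omega
          · exact (hun _ hm).2 rfl
        · omega
      refine Or.inl ⟨M - 1 - pr.1, by omega, List.mem_map.2 ⟨pr, hpr, ?_⟩⟩
      rw [Prod.ext_iff]
      exact ⟨by omega, rfl⟩
end Rev

section PermPart
variable {C S : Type*} [Inhabited C] {R : C → S → Prop} [∀ c s, Decidable (R c s)]

def exgF (F : List (ℕ × ℕ)) (k : ℕ) : ℕ :=
  match F.find? (fun p => p.1 == k) with
  | some p => p.2
  | none =>
    match F.find? (fun p => p.2 == k) with
    | some p => p.1
    | none => k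

lemma exchange_eq (w : List (C ⊕ S)) :
    exchange R w = (List.range w.length).map
      (fun k => w.getD (exgF (fcfsMatching R w) k) (Sum.inl default)) := by
  rw [exchange]
  apply List.map_congr_left
  intro k _
  rcases h1 : (fcfsMatching R w).find? (fun p => p.1 == k) with _ | p
  · rcases h2 : (fcfsMatching R w).find? (fun p => p.2 == k) with _ | p
    · simp [exgF, h1, h2]
    · simp [exgF, h1, h2]
  · simp [exgF, h1]

lemma exgF_spec (w : List (C ⊕ S)) (k : ℕ) :
    (∃ pr ∈ fcfsMatching R w, k = pr.1 ∧ exgF (fcfsMatching R w) k = pr.2) ∨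
    (∃ pr ∈ fcfsMatching R w, k = pr.2 ∧ exgF (fcfsMatching R w) k = pr.1) ∨
    ((∀ pr ∈ fcfsMatching R w, pr.1 ≠ k ∧ pr.2 ≠ k) ∧ exgF (fcfsMatching R w) k = k) := by
  by_cases h1 : ∃ pr ∈ fcfsMatching R w, pr.1 = k
  · obtain ⟨pr, hpr, rfl⟩ := h1
    exact Or.inl ⟨pr, hpr, rfl, by simp [exgF, find_fst_eq hpr]⟩
  · by_cases h2 : ∃ pr ∈ fcfsMatching R w, pr.2 = k
    · obtain ⟨pr, hpr, rfl⟩ := h2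
      refine Or.inr (Or.inl ⟨pr, hpr, rfl, ?_⟩)
      simp [exgF, find_fst_of_snd_eq_none hpr, find_snd_eq hpr]
    · push_neg at h1 h2
      have hf1 : (fcfsMatching R w).find? (fun p => p.1 == k) = none := by
        rw [List.find?_eq_none]; intro x hx; simpa using h1 x hx
      have hf2 : (fcfsMatching R w).find? (fun p => p.2 == k) = none := by
        rw [List.find?_eq_none]; intro x hx; simpa using h2 x hx
      exact Or.inr (Or.inr ⟨fun pr hpr => ⟨h1 pr hpr, h2 pr hpr⟩, by simp [exgF, hf1, hf2]⟩)

lemma exchange_perm (w : List (C ⊕ S)) : (exchange R w).Perm w := by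
  obtain ⟨hA, hB, hC, _⟩ := fcfsMatching_spec (R := R) w
  set F := fcfsMatching R w with hF
  have hsndnd : (F.map Prod.snd).Nodup := by
    rw [List.Nodup, List.pairwise_map]
    exact hB.imp (fun h => Nat.ne_of_lt h)
  have hcls := exgF_spec (R := R) w
  have hlt : ∀ k, k < w.length → exgF F k < w.length := by
    intro k hk
    rcases hcls k with ⟨pr, hpr, _, he⟩ | ⟨pr, hpr, _, he⟩ | ⟨_, he⟩
    · obtain ⟨_, c, s, _, hws, _⟩ := hA pr hpr
      rw [he]; exact lt_of_getElem?_some hws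
    · obtain ⟨_, c, s, hwc, _, _⟩ := hA pr hpr
      rw [he]; exact lt_of_getElem?_some hwc
    · rwa [he]
  have hinj : ∀ k1 ∈ List.range w.length, ∀ k2 ∈ List.range w.length,
      exgF F k1 = exgF F k2 → k1 = k2 := by
    intro k1 _ k2 _ he
    rcases hcls k1 with ⟨pr, hpr, hk, h1⟩ | ⟨pr, hpr, hk, h1⟩ | ⟨hun, h1⟩ <;>
      rcases hcls k2 with ⟨qr, hqr, hk', h2⟩ | ⟨qr, hqr, hk', h2⟩ | ⟨hun', h2⟩
    · rw [h1, h2] at he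
      rw [hk, hk', mem_inj_of_nodup_map Prod.snd hsndnd hpr hqr he]
    · exfalso
      rw [h1, h2] at he
      obtain ⟨_, c, s, _, hws, _⟩ := hA pr hpr
      obtain ⟨_, c', s', hwc', _, _⟩ := hA qr hqr
      rw [he, hwc'] at hws
      simp at hws
    · exfalso
      rw [h1, h2] at he
      exact (hun' pr hpr).2 he
    · exfalso
      rw [h1, h2] at he
      obtain ⟨_, c, s, hwc, _, _⟩ := hA pr hpr
      obtain ⟨_, c', s', _, hws', _⟩ := hA qr hqr
      rw [he, hws'] at hwc
      simp at hwc
    · rw [h1, h2] at he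
      rw [hk, hk', mem_inj_of_nodup_map Prod.fst hC hpr hqr he]
    · exfalso
      rw [h1, h2] at he
      exact (hun' pr hpr).1 he
    · exfalso
      rw [h1, h2] at he
      exact (hun qr hqr).2 he.symm
    · exfalso
      rw [h1, h2] at he
      exact (hun qr hqr).1 he.symm
    · rw [h1, h2] at he
      exact he
  have hnd1 : ((List.range w.length).map (exgF F)).Nodup :=
    (List.nodup_range).map_on hinj
  have hiff := perm_of_nodup_subset_length hnd1 (List.nodup_range)
    (by
      intro x hx
      obtain ⟨k, hk, rfl⟩ := List.mem_map.1 hx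
      rw [List.mem_range] at *
      exact hlt k hk)
    (by rw [List.length_map])
  have hperm1 : ((List.range w.length).map (exgF F)).Perm (List.range w.length) :=
    (List.perm_ext_iff_of_nodup hnd1 (List.nodup_range)).2 hiff
  have : exchange R w = ((List.range w.length).map (exgF F)).map
      (fun v => w.getD v (Sum.inl default)) := by
    rw [exchange_eq, List.map_map]
    rfl
  rw [this]
  have := hperm1.map (fun v => w.getD v (Sum.inl default))
  rw [map_getD_range w (Sum.inl default)] at this
  exact this
end PermPart

/-- if `w` is a perfect block then its exchanged-reversed word is again a
perfect block with the same multiset of entries, so for every probability assignment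
`p : 𝒞 ∪ 𝒮 → [0,1]` the two blocks have the same product probability, namely
`∏_{c} p(c)^{#c} · ∏_{s} p(s)^{#s}` (hence, for i.i.d. entries with `P(c)=α_c`,
`P(s)=β_s`, a perfect block and its exchanged-reversed block are equally likely, and
conditionally on being a perfect block of length `M` the probability is
`κ_M · ∏ α_c^{#c} · ∏ β_s^{#s}`). -/
theorem stmt12 {C S : Type*} [Fintype C] [Fintype S] [Nonempty C] [Nonempty S]
    [Inhabited C] [DecidableEq C] [DecidableEq S]
    (R : C → S → Prop) [∀ c s, Decidable (R c s)]
    (w : List (C ⊕ S)) (hw : IsPerfect R w) :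
    IsPerfect R (exchange R w).reverse ∧
    (∀ x : C ⊕ S, ((exchange R w).reverse).count x = w.count x) ∧
    (∀ p : C ⊕ S → ℝ, (∀ x, 0 ≤ p x ∧ p x ≤ 1) →
      (((exchange R w).reverse).map p).prod = (w.map p).prod ∧
      (w.map p).prod =
        (∏ c : C, p (Sum.inl c) ^ w.count (Sum.inl c)) *
          (∏ s : S, p (Sum.inr s) ^ w.count (Sum.inr s))) := by
  obtain ⟨hA, hB, hC, _⟩ := fcfsMatching_spec (R := R) w
  set wrev := (exchange R w).reverse with hwrev
  set F := fcfsMatching R w with hF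
  have hrevperm : wrev.Perm w := ((exchange R w).reverse_perm).trans (exchange_perm w)
  have hperfect : IsPerfect R wrev := by
    obtain ⟨_, _, hLC, hLspec⟩ := fcfsMatching_spec (R := R) wrev
    have hLnd : (fcfsMatching R wrev).Nodup := List.Nodup.of_map _ hLC
    have hNspec := rev_spec (R := R) hw
    have hiff := hLspec.unique hNspec
    have hbounds : ∀ pr ∈ F, pr.1 < pr.2 ∧ pr.2 < w.length := by
      intro pr hpr
      obtain ⟨hlt, c, s, hwc, hws, _⟩ := hA pr hpr
      exact ⟨hlt, lt_of_getElem?_some hws⟩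
    have hmapnd : (F.map (fun q => (w.length - 1 - q.2, w.length - 1 - q.1))).Nodup := by
      rw [List.Nodup, List.pairwise_map]
      refine List.Pairwise.imp_of_mem ?_ hB
      intro q q' hq hq' hlt
      obtain ⟨_, hb⟩ := hbounds q hq
      obtain ⟨_, hb'⟩ := hbounds q' hq'
      intro heq
      rw [Prod.ext_iff] at heq
      obtain ⟨h1, _⟩ := heq
      simp only at h1
      omega
    have hpermL : (fcfsMatching R wrev).Perm
        (F.map (fun q => (w.length - 1 - q.2, w.length - 1 - q.1))) :=
      (List.perm_ext_iff_of_nodup hLnd hmapnd).2 hiff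
    have hlen : (fcfsMatching R wrev).length = F.length := by
      rw [hpermL.length_eq, List.length_map]
    rw [IsPerfect, hlen, hw]
    rw [numC, numC]
    exact (hrevperm.countP_eq _).symm
  have hcnt : ∀ (x : C ⊕ S) (l : List (C ⊕ S)),
      l.count x = List.countP (fun a => decide (a = x)) l := by
    intro x l
    rw [List.count_eq_countP]
    apply List.countP_congr
    intro a ha
    cases a <;> cases x
    · rename_i a' x'
      rw [show (Sum.inl (β := S) a' == Sum.inl x') = (a' == x') from rfl]
      simp [beq_iff_eq]
    · rename_i a' x'
      rw [show (Sum.inl a' == Sum.inr x') = false from rfl]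
      simp
    · rename_i a' x'
      rw [show (Sum.inr a' == Sum.inl x') = false from rfl]
      simp
    · rename_i a' x'
      rw [show (Sum.inr (α := C) a' == Sum.inr x') = (a' == x') from rfl]
      simp [beq_iff_eq]
  have hcnt2 : ∀ (x : C ⊕ S) (l : List (C ⊕ S)),
      @List.count _ instBEqOfDecidableEq x l = List.countP (fun a => decide (a = x)) l := by
    intro x l
    rw [@List.count_eq_countP]
    apply List.countP_congr
    intro a _
    simp [@beq_iff_eq _ instBEqOfDecidableEq]
  refine ⟨hperfect, ?_, ?_⟩
  · intro x
    rw [hcnt, hcnt]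
    exact hrevperm.countP_eq _
  · intro p _
    have key : (w.map p).prod = ∏ x : C ⊕ S, p x ^ List.countP (fun a => decide (a = x)) w := by
      rw [Finset.prod_list_map_count w p]
      rw [← Finset.prod_subset (Finset.subset_univ w.toFinset) ?_]
      · apply Finset.prod_congr rfl
        intro x _
        rw [hcnt2]
      · intro x _ hx
        have hz : List.countP (fun a => decide (a = x)) w = 0 := by
          rw [List.countP_eq_zero]
          intro a ha
          simp only [decide_eq_true_eq]
          rintro rfl
          exact hx (by simpa using ha)
        rw [hz, pow_zero]
    refine ⟨(hrevperm.map p).prod_eq, ?_⟩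
    rw [key, Fintype.prod_sum_type]
    congr 1
    · apply Finset.prod_congr rfl
      intro c _
      rw [hcnt]
    · apply Finset.prod_congr rfl
      intro s' _
      rw [hcnt]
end
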